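/- arXiv:1211.3963 — 9 statements merged into one kernel-verified Lean document; each statement's English description precedes it below -/
import Mathlib

section
/- Let a be a nonzero real number and n a natural number. Define G : ℝ → ℝ by G(x) = -Σ_{k=0}^{n} (n!/(n-k)!) · x^{n-k}/a^{k+1} · cos(a x + kπ/2). Then for every real x, G has derivative G'(x) = x^n · sin(a x). -/
/-- Corrected version of Gradshteyn–Ryzhik 2.633.6: an antiderivative of `x^n * sin(a x)`. -/
theorem stmt1 (a : ℝ) (ha : a ≠ 0) (n : ℕ) (G : ℝ → ℝ)
    (hG : ∀ x : ℝ, G x =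
      -∑ k ∈ Finset.range (n + 1),
          ((n.factorial : ℝ) / ((n - k).factorial : ℝ)) * x ^ (n - k) / a ^ (k + 1) *
            Real.cos (a * x + k * Real.pi / 2)) :
    ∀ x : ℝ, HasDerivAt G (x ^ n * Real.sin (a * x)) x := by
  intro x
  have hfun : G = fun y : ℝ =>
      -∑ k ∈ Finset.range (n + 1),
          ((n.factorial : ℝ) / ((n - k).factorial : ℝ)) * y ^ (n - k) / a ^ (k + 1) *
            Real.cos (a * y + k * Real.pi / 2) := funext hG
  rw [hfun]
  set W : ℕ → ℝ := fun j => (n.descFactorial j : ℝ) * x ^ (n - j) / a ^ j *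
      Real.cos (a * x + ((j : ℝ) + 1) * Real.pi / 2) with hW
  have hterm : ∀ k ∈ Finset.range (n + 1),
      HasDerivAt (fun y : ℝ =>
        ((n.factorial : ℝ) / ((n - k).factorial : ℝ)) * y ^ (n - k) / a ^ (k + 1) *
          Real.cos (a * y + k * Real.pi / 2)) (W k - W (k + 1)) x := by
    intro k hk
    have hkn : k ≤ n := Nat.lt_succ_iff.mp (Finset.mem_range.mp hk)
    have hC : ((n.factorial : ℝ) / ((n - k).factorial : ℝ)) = (n.descFactorial k : ℝ) := by
      have h := Nat.factorial_mul_descFactorial hkn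
      have h' : ((n - k).factorial : ℝ) * (n.descFactorial k : ℝ) = (n.factorial : ℝ) := by
        exact_mod_cast congrArg (Nat.cast : ℕ → ℝ) h
      field_simp [Nat.factorial_ne_zero] at h' ⊢
      linarith [h']
    have hlin : HasDerivAt (fun y : ℝ => a * y + (k : ℝ) * Real.pi / 2) a x := by
      simpa using ((hasDerivAt_id x).const_mul a).add_const ((k : ℝ) * Real.pi / 2)
    have hcos := hlin.cos
    have hpow := hasDerivAt_pow (n - k) x
    have hmul := (hpow.mul hcos).const_mul
      (((n.factorial : ℝ) / ((n - k).factorial : ℝ)) / a ^ (k + 1))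
    have e1 : Real.cos (a * x + ((k : ℝ) + 1) * Real.pi / 2)
        = -Real.sin (a * x + (k : ℝ) * Real.pi / 2) := by
      rw [show a * x + ((k : ℝ) + 1) * Real.pi / 2
          = (a * x + (k : ℝ) * Real.pi / 2) + Real.pi / 2 by ring,
        Real.cos_add_pi_div_two]
    have e2 : Real.cos (a * x + (((k + 1 : ℕ) : ℝ) + 1) * Real.pi / 2)
        = -Real.cos (a * x + (k : ℝ) * Real.pi / 2) := by
      push_cast
      rw [show a * x + ((k : ℝ) + 1 + 1) * Real.pi / 2
          = (a * x + (k : ℝ) * Real.pi / 2) + Real.pi by ring,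
        Real.cos_add_pi]
    convert hmul using 1
    iterate 2 exact rfl
    · ext y; simp only [Pi.mul_apply]; ring
    · simp only [hW, e1, e2, Nat.descFactorial_succ, Nat.cast_mul, hC]
      have hsub : n - (k + 1) = n - k - 1 := by omega
      rw [hsub]
      field_simp
      ring
  have hsum := (HasDerivAt.fun_sum hterm).neg
  have htel : ∑ k ∈ Finset.range (n + 1), (W k - W (k + 1)) = W 0 - W (n + 1) :=
    Finset.sum_range_sub' W (n + 1)
  have hW0 : W 0 = -(x ^ n * Real.sin (a * x)) := by
    have harg : a * x + (((0 : ℕ) : ℝ) + 1) * Real.pi / 2 = a * x + Real.pi / 2 := by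
      push_cast; ring
    simp [hW, harg, Real.cos_add_pi_div_two]
  have hWn : W (n + 1) = 0 := by
    simp [hW, Nat.descFactorial_eq_zero_iff_lt.mpr (Nat.lt_succ_self n)]
  convert hsum using 1
  iterate 3 exact rfl
  rw [htel, hW0, hWn]
  ring
end

section
/- For all natural numbers m, n with n ≥ 1 and every real u, ∫_{0}^{u} x^m · e^{i x^n} dx = Σ_{l=0}^{∞} i^l · u^{m+nl+1} / ((m+nl+1)·l!), where the series of complex numbers on the right converges. -/
open intervalIntegral

set_option maxHeartbeats 1000000

/-- Termwise integration of the exponential series for `∫ x^m exp(i x^n) dx`. -/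
theorem stmt4 (m n : ℕ) (hn : 1 ≤ n) (u : ℝ) :
    Summable (fun l : ℕ => Complex.I ^ l * (u : ℂ) ^ (m + n * l + 1) /
        (((m + n * l + 1 : ℕ) : ℂ) * (l.factorial : ℂ))) ∧
    ∫ x in (0:ℝ)..u, (x : ℂ) ^ m * Complex.exp (Complex.I * (x : ℂ) ^ n) =
      ∑' l : ℕ, Complex.I ^ l * (u : ℂ) ^ (m + n * l + 1) /
        (((m + n * l + 1 : ℕ) : ℂ) * (l.factorial : ℂ)) := by
  -- the series of continuous functions
  set F : ℕ → C(ℝ, ℂ) := fun l =>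
    ⟨fun x => Complex.I ^ l * (x : ℂ) ^ (m + n * l) / (l.factorial : ℂ), by fun_prop⟩ with hF
  set C : ℝ := max |u| 1 with hC
  have hC1 : 1 ≤ C := le_max_right _ _
  have hC0 : 0 ≤ C := le_trans zero_le_one hC1
  have huC : |u| ≤ C := le_max_left _ _
  have hf_sum : Summable fun l : ℕ =>
      ‖(F l).restrict (⟨Set.uIcc (0:ℝ) u, isCompact_uIcc⟩ : TopologicalSpace.Compacts ℝ)‖ := by
    refine Summable.of_nonneg_of_le (fun l => norm_nonneg _) ?_
      ((Real.summable_pow_div_factorial (C ^ n)).mul_left (C ^ m))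
    · intro l
      apply (ContinuousMap.norm_le _ (by positivity)).2
      rintro ⟨x, hx⟩
      simp only [ContinuousMap.restrict_apply, hF, ContinuousMap.coe_mk]
      have hxu : |x| ≤ C := by
        refine le_trans ?_ huC
        have hx' : x ∈ Set.uIcc (0:ℝ) u := hx
        rcases le_total 0 u with h | h
        · rw [Set.uIcc_of_le h] at hx'
          rw [abs_of_nonneg hx'.1, abs_of_nonneg h]; exact hx'.2
        · rw [Set.uIcc_of_ge h] at hx'
          rw [abs_of_nonpos hx'.2, abs_of_nonpos h]; linarith [hx'.1]
      calc ‖Complex.I ^ l * (x : ℂ) ^ (m + n * l) / (l.factorial : ℂ)‖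
          = |x| ^ (m + n * l) / (l.factorial : ℝ) := by
            rw [norm_div, norm_mul, norm_pow, norm_pow, Complex.norm_I, one_pow, one_mul,
              Complex.norm_natCast, Complex.norm_real, Real.norm_eq_abs]
        _ ≤ C ^ (m + n * l) / (l.factorial : ℝ) := by gcongr
        _ = C ^ m * ((C ^ n) ^ l / (l.factorial : ℝ)) := by
            rw [pow_add, pow_mul, mul_div_assoc]
  have key := intervalIntegral.hasSum_intervalIntegral_of_summable_norm
    (a := 0) (b := u) hf_sum
  -- pointwise sum equals the integrand
  have hpt : ∀ x : ℝ, ∑' l, F l x = (x : ℂ) ^ m * Complex.exp (Complex.I * (x : ℂ) ^ n) := by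
    intro x
    rw [Complex.exp_eq_exp_ℂ, NormedSpace.exp_eq_tsum_div, ← tsum_mul_left]
    congr 1
    ext l
    simp only [hF, ContinuousMap.coe_mk]
    rw [mul_pow, ← pow_mul, pow_add, mul_comm (n) l]
    ring
  -- each term integral
  have hterm : ∀ l : ℕ, (∫ x in (0:ℝ)..u, F l x) =
      Complex.I ^ l * (u : ℂ) ^ (m + n * l + 1) /
        (((m + n * l + 1 : ℕ) : ℂ) * (l.factorial : ℂ)) := by
    intro l
    simp only [hF, ContinuousMap.coe_mk]
    have : (∫ x in (0:ℝ)..u, Complex.I ^ l * (x : ℂ) ^ (m + n * l) / (l.factorial : ℂ))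
        = (Complex.I ^ l / (l.factorial : ℂ)) * ∫ x in (0:ℝ)..u, ((x ^ (m + n * l) : ℝ) : ℂ) := by
      rw [← intervalIntegral.integral_const_mul]
      congr 1; ext x; push_cast; ring
    rw [this, intervalIntegral.integral_ofReal, integral_pow]
    have h1 : ((m + n * l + 1 : ℕ) : ℂ) ≠ 0 := Nat.cast_ne_zero.2 (by omega)
    have h2 : (l.factorial : ℂ) ≠ 0 := Nat.cast_ne_zero.2 l.factorial_ne_zero
    push_cast
    field_simp
    ring
  constructor
  · have := key.summable
    rwa [funext hterm] at this
  · rw [show (∫ x in (0:ℝ)..u, (x : ℂ) ^ m * Complex.exp (Complex.I * (x : ℂ) ^ n))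
      = ∫ x in (0:ℝ)..u, ∑' l, F l x from by simp_rw [hpt]]
    rw [← key.tsum_eq]
    exact tsum_congr hterm
end

section
/- For all natural numbers m, n with n ≥ 1 and every real u, ∫_{0}^{u} x^m · sin(x^n) dx = Σ_{l=0}^{∞} (-1)^l · u^{m+2nl+n+1} / ((m+2nl+n+1)·(2l+1)!), where the series on the right converges. -/
set_option maxHeartbeats 1000000 in
/-- Termwise integration of the Taylor series of `x^m sin(x^n)`. -/
theorem stmt5 (m n : ℕ) (hn : 1 ≤ n) (u : ℝ) :
    Summable (fun l : ℕ => (-1 : ℝ) ^ l * u ^ (m + 2 * n * l + n + 1) /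
        (((m + 2 * n * l + n + 1 : ℕ) : ℝ) * ((2 * l + 1).factorial : ℝ))) ∧
    ∫ x in (0:ℝ)..u, x ^ m * Real.sin (x ^ n) =
      ∑' l : ℕ, (-1 : ℝ) ^ l * u ^ (m + 2 * n * l + n + 1) /
        (((m + 2 * n * l + n + 1 : ℕ) : ℝ) * ((2 * l + 1).factorial : ℝ)) := by
  set R : ℝ := |u| + 1 with hR
  have hR1 : (1:ℝ) ≤ R := by rw [hR]; linarith [abs_nonneg u]
  set g : ℕ → ℝ → ℝ := fun l x => (-1 : ℝ) ^ l * x ^ (m + 2 * n * l + n + 1) /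
      (((m + 2 * n * l + n + 1 : ℕ) : ℝ) * ((2 * l + 1).factorial : ℝ)) with hg
  set g' : ℕ → ℝ → ℝ := fun l x => (-1 : ℝ) ^ l * x ^ (m + 2 * n * l + n) /
      (((2 * l + 1).factorial : ℝ)) with hg'
  set c : ℕ → ℝ := fun l => R ^ (m + n) * (R ^ (2 * n)) ^ l / (l.factorial : ℝ) with hc
  have hcs : Summable c := by
    have h := (Real.summable_pow_div_factorial (R ^ (2 * n))).mul_left (R ^ (m + n))
    apply h.congr
    intro l
    simp only [hc, mul_div_assoc]
  have hderiv : ∀ l x, HasDerivAt (g l) (g' l x) x := by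
    intro l x
    have hne : (((m + 2 * n * l + n + 1 : ℕ) : ℝ)) ≠ 0 := by positivity
    have := ((hasDerivAt_pow (m + 2 * n * l + n + 1) x).const_mul ((-1:ℝ)^l)).div_const
      (((m + 2 * n * l + n + 1 : ℕ) : ℝ) * ((2 * l + 1).factorial : ℝ))
    convert this using 1
    · rfl
    · rfl
    simp only [Nat.add_sub_cancel]
    rw [show (-1:ℝ)^l * (((m + 2*n*l + n + 1 : ℕ):ℝ) * x ^ (m + 2*n*l+n)) =
        ((m + 2*n*l + n + 1 : ℕ):ℝ) * ((-1:ℝ)^l * x ^ (m + 2*n*l+n)) from by ring,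
      mul_div_mul_left _ _ hne]
  have hbound : ∀ l x, x ∈ Metric.ball (0:ℝ) R → ‖g' l x‖ ≤ c l := by
    intro l x hx
    simp only [Metric.mem_ball, Real.dist_eq, sub_zero] at hx
    have hxR : |x| ≤ R := le_of_lt hx
    have h1 : ‖g' l x‖ = |x| ^ (m + 2 * n * l + n) / ((2 * l + 1).factorial : ℝ) := by
      rw [hg']
      rw [norm_div, norm_mul, norm_pow, norm_neg, norm_one, one_pow, one_mul,
        Real.norm_eq_abs, Real.norm_eq_abs, abs_pow, Nat.abs_cast]
    rw [h1]
    have h2 : |x| ^ (m + 2 * n * l + n) ≤ R ^ (m + n) * (R ^ (2 * n)) ^ l := by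
      calc |x| ^ (m + 2 * n * l + n) ≤ R ^ (m + 2 * n * l + n) :=
            pow_le_pow_left₀ (abs_nonneg x) hxR _
        _ = R ^ (m + n) * (R ^ (2 * n)) ^ l := by rw [← pow_mul, ← pow_add]; ring_nf
    have h3 : (l.factorial : ℝ) ≤ ((2 * l + 1).factorial : ℝ) := by
      exact_mod_cast Nat.factorial_le (by omega)
    have h4 : (0:ℝ) < l.factorial := by positivity
    calc |x| ^ (m + 2 * n * l + n) / ((2 * l + 1).factorial : ℝ)
        ≤ (R ^ (m + n) * (R ^ (2 * n)) ^ l) / (l.factorial : ℝ) := by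
          apply div_le_div₀ (by positivity) h2 h4 h3
      _ = c l := rfl
  have hg0 : Summable fun l => g l 0 := by
    apply summable_of_ne_finset_zero (s := ∅)
    intro l _
    simp [hg, zero_pow (by omega : m + 2 * n * l + n + 1 ≠ 0)]
  have hsum : ∀ x : ℝ, HasSum (fun l => g' l x) (x ^ m * Real.sin (x ^ n)) := by
    intro x
    have h := (Real.hasSum_sin (x ^ n)).mul_left (x ^ m)
    have hfun : (fun l : ℕ => x ^ m * ((-1:ℝ)^l * (x ^ n) ^ (2 * l + 1) /
        (((2 * l + 1).factorial : ℕ) : ℝ))) = fun l : ℕ => g' l x := by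
      funext l
      simp only [hg']
      rw [← pow_mul, show n * (2 * l + 1) = 2 * n * l + n from by ring]
      rw [show m + 2 * n * l + n = m + (2 * n * l + n) from by ring, pow_add]
      ring
    rw [← hfun]
    exact h
  have hmem : ∀ x ∈ Set.uIcc (0:ℝ) u, x ∈ Metric.ball (0:ℝ) R := by
    intro x hx
    simp only [Metric.mem_ball, Real.dist_eq, sub_zero]
    have h1 := le_abs_self u
    have h2 := neg_abs_le u
    have hxu : |x| ≤ |u| := by
      rcases le_total 0 u with h | h
      · rw [Set.uIcc_of_le h] at hx
        rw [abs_le]; exact ⟨by linarith [hx.1], by linarith [hx.2]⟩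
      · rw [Set.uIcc_of_ge h] at hx
        rw [abs_le]; exact ⟨by linarith [hx.1], by linarith [hx.2]⟩
    linarith
  have hF : ∀ x ∈ Metric.ball (0:ℝ) R,
      HasDerivAt (fun z => ∑' l, g l z) (x ^ m * Real.sin (x ^ n)) x := by
    intro x hx
    have := hasDerivAt_tsum_of_isPreconnected hcs Metric.isOpen_ball
      ((convex_ball (0:ℝ) R).isPreconnected) (fun l y _ => hderiv l y) hbound
      (Metric.mem_ball_self (by linarith)) hg0 hx
    rwa [(hsum x).tsum_eq] at this
  have hSummable : ∀ x ∈ Metric.ball (0:ℝ) R, Summable fun l => g l x := by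
    intro x hx
    exact summable_of_summable_hasDerivAt_of_isPreconnected hcs Metric.isOpen_ball
      (convex_ball (0:ℝ) R).isPreconnected (fun l y _ => hderiv l y) hbound
      (Metric.mem_ball_self (by linarith)) hg0 hx
  have huball : u ∈ Metric.ball (0:ℝ) R := by
    simp only [Metric.mem_ball, Real.dist_eq, sub_zero]; linarith [le_abs_self u, abs_nonneg u]
  constructor
  · exact hSummable u huball
  · have hcont : IntervalIntegrable (fun x => x ^ m * Real.sin (x ^ n)) MeasureTheory.volume 0 u :=
      (Continuous.mul (continuous_pow m) (Real.continuous_sin.comp (continuous_pow n))).intervalIntegrable 0 u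
    have := intervalIntegral.integral_eq_sub_of_hasDerivAt
      (f := fun z => ∑' l, g l z) (fun x hx => hF x (hmem x hx)) hcont
    rw [this]
    simp only [hg]
    have h0 : (∑' l : ℕ, (-1:ℝ)^l * (0:ℝ) ^ (m + 2 * n * l + n + 1) /
        (((m + 2 * n * l + n + 1 : ℕ):ℝ) * (((2 * l + 1).factorial : ℕ) : ℝ))) = 0 := by
      have hz : ∀ l : ℕ, (-1:ℝ)^l * (0:ℝ) ^ (m + 2 * n * l + n + 1) /
          (((m + 2 * n * l + n + 1 : ℕ):ℝ) * (((2 * l + 1).factorial : ℕ) : ℝ)) = 0 := fun l => by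
        simp [zero_pow (by omega : m + 2 * n * l + n + 1 ≠ 0)]
      rw [tsum_congr hz, tsum_zero]
    rw [h0, sub_zero]
end

section
/- For all natural numbers m, n with n ≥ 1 and every real u, ∫_{0}^{u} x^m · e^{i x^n} dx = e^{i u^n} · Σ_{k=0}^{∞} (−i·n)^k · u^{m+1+nk} / ∏_{j=0}^{k} (m+1+j·n), where the series of complex numbers converges. -/
open Complex Finset Filter Topology

lemma contE (p n : ℕ) : Continuous fun x : ℝ => (x:ℂ)^p * Complex.exp (Complex.I * (x:ℂ)^n) := by
  fun_prop

lemma ibp (p n : ℕ) (hn : 1 ≤ n) (u : ℝ) :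
    ∫ x in (0:ℝ)..u, (x:ℂ)^p * Complex.exp (Complex.I * (x:ℂ)^n)
      = (u:ℂ)^(p+1)/((p:ℂ)+1) * Complex.exp (Complex.I*(u:ℂ)^n)
        - Complex.I*(n:ℂ)/((p:ℂ)+1) *
            ∫ x in (0:ℝ)..u, (x:ℂ)^(p+n) * Complex.exp (Complex.I*(x:ℂ)^n) := by
  obtain ⟨n', rfl⟩ : ∃ n', n = n' + 1 := ⟨n - 1, by omega⟩
  have hp1 : ((p:ℂ)+1) ≠ 0 := by
    have := Nat.cast_add_one_ne_zero (R := ℂ) p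
    exact_mod_cast this
  have key : ∀ x : ℝ, HasDerivAt
      (fun y : ℝ => (y:ℂ)^(p+1)/((p:ℂ)+1) * Complex.exp (Complex.I*(y:ℂ)^(n'+1)))
      ((x:ℂ)^p * Complex.exp (Complex.I*(x:ℂ)^(n'+1))
        + Complex.I*((n':ℂ)+1)/((p:ℂ)+1) * ((x:ℂ)^(p+(n'+1)) * Complex.exp (Complex.I*(x:ℂ)^(n'+1)))) x := by
    intro x
    have h1 : HasDerivAt (fun z : ℂ => z^(p+1)/((p:ℂ)+1))
        ((((p:ℂ)+1) * (x:ℂ)^p)/((p:ℂ)+1)) (x:ℂ) := by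
      simpa using (hasDerivAt_pow (p+1) (x:ℂ)).div_const ((p:ℂ)+1)
    have h2 : HasDerivAt (fun z : ℂ => Complex.exp (Complex.I * z^(n'+1)))
        (Complex.exp (Complex.I * (x:ℂ)^(n'+1)) * (Complex.I * (((n':ℂ)+1) * (x:ℂ)^n'))) (x:ℂ) := by
      have := ((hasDerivAt_pow (n'+1) (x:ℂ)).const_mul Complex.I).cexp
      simpa using this
    have := (h1.mul h2).comp_ofReal
    convert this using 1
    · rfl
    field_simp
    ring
  have hcont : Continuous fun x : ℝ =>
      (x:ℂ)^p * Complex.exp (Complex.I*(x:ℂ)^(n'+1))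
        + Complex.I*((n':ℂ)+1)/((p:ℂ)+1) * ((x:ℂ)^(p+(n'+1)) * Complex.exp (Complex.I*(x:ℂ)^(n'+1))) := by
    fun_prop
  have hFTC := intervalIntegral.integral_eq_sub_of_hasDerivAt (fun x _ => key x)
      (hcont.intervalIntegrable 0 u)
  rw [intervalIntegral.integral_add (g := fun x : ℝ => Complex.I*((n':ℂ)+1)/((p:ℂ)+1) * ((x:ℂ)^(p+(n'+1)) * Complex.exp (Complex.I*(x:ℂ)^(n'+1)))) ((contE p (n'+1)).intervalIntegrable 0 u)
      ((continuous_const.mul (contE (p+(n'+1)) (n'+1))).intervalIntegrable 0 u),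
    intervalIntegral.integral_const_mul] at hFTC
  simp only [Complex.ofReal_zero, ne_eq, hp1, not_false_iff, zero_pow, Nat.succ_ne_zero,
    zero_div, zero_mul, mul_zero] at hFTC
  push_cast at hFTC ⊢
  linear_combination hFTC

lemma prodge (m n : ℕ) (hn : 1 ≤ n) (k : ℕ) :
    n^k * k.factorial ≤ ∏ j ∈ Finset.range (k+1), (m+1+j*n) := by
  induction k with
  | zero => simpa using Nat.le_add_left 1 m
  | succ k ih =>
    rw [Finset.prod_range_succ]
    calc n^(k+1) * (k+1).factorial = (n^k * k.factorial) * ((k+1)*n) := by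
          rw [Nat.factorial_succ]; ring
      _ ≤ (∏ j ∈ Finset.range (k+1), (m+1+j*n)) * (m+1+(k+1)*n) := by
          exact Nat.mul_le_mul ih (by omega)

lemma prodne (m n : ℕ) (K : ℕ) :
    (∏ j ∈ Finset.range K, ((m+1+j*n : ℕ) : ℂ)) ≠ 0 := by
  apply Finset.prod_ne_zero_iff.mpr
  intro j _
  exact Nat.cast_ne_zero.mpr (by omega)

lemma steps (m n : ℕ) (hn : 1 ≤ n) (u : ℝ) (K : ℕ) :
    ∫ x in (0:ℝ)..u, (x:ℂ)^m * Complex.exp (Complex.I*(x:ℂ)^n)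
      = Complex.exp (Complex.I*(u:ℂ)^n) * ∑ k ∈ Finset.range K,
          (-Complex.I*(n:ℂ))^k * (u:ℂ)^(m+1+n*k) / ∏ j ∈ Finset.range (k+1), ((m+1+j*n : ℕ):ℂ)
        + ((-Complex.I*(n:ℂ))^K / ∏ j ∈ Finset.range K, ((m+1+j*n : ℕ):ℂ))
          * ∫ x in (0:ℝ)..u, (x:ℂ)^(m+n*K) * Complex.exp (Complex.I*(x:ℂ)^n) := by
  induction K with
  | zero => simp
  | succ K ih =>
    rw [ih, ibp (m+n*K) n hn u, Finset.sum_range_succ, Finset.prod_range_succ]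
    have hPK := prodne m n K
    have hK : ((m+1+K*n : ℕ) : ℂ) ≠ 0 := Nat.cast_ne_zero.mpr (by omega)
    have he1 : m + n*K + 1 = m + 1 + n*K := by omega
    have he2 : m + n*K + n = m + n*(K+1) := by ring
    have hc : ((m+n*K:ℕ):ℂ) + 1 = ((m+1+K*n : ℕ):ℂ) := by push_cast; ring
    rw [he1, he2, hc]
    set S := ∑ k ∈ Finset.range K,
      (-Complex.I*(n:ℂ))^k * (u:ℂ)^(m+1+n*k) / ∏ j ∈ Finset.range (k+1), ((m+1+j*n : ℕ):ℂ) with hS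
    set P := ∏ j ∈ Finset.range K, ((m+1+j*n : ℕ):ℂ) with hP
    set J := ∫ x in (0:ℝ)..u, (x:ℂ)^(m+n*(K+1)) * Complex.exp (Complex.I*(x:ℂ)^n) with hJ
    set E := Complex.exp (Complex.I*(u:ℂ)^n) with hE
    have hK' : ((m:ℂ) + 1 + (K:ℂ)*(n:ℂ)) ≠ 0 := by push_cast at hK; convert hK using 1
    field_simp
    ring

lemma normb (m n : ℕ) (hn : 1 ≤ n) (u : ℝ) (k : ℕ) :
    ‖(-Complex.I*(n:ℂ))^k * (u:ℂ)^(m+1+n*k) / ∏ j ∈ Finset.range (k+1), ((m+1+j*n : ℕ):ℂ)‖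
      ≤ |u|^(m+1) * (|u|^n)^k / k.factorial := by
  have hP : (∏ j ∈ Finset.range (k+1), ((m+1+j*n : ℕ):ℂ))
      = ((∏ j ∈ Finset.range (k+1), (m+1+j*n) : ℕ) : ℂ) := by push_cast; rfl
  rw [hP]
  simp only [norm_div, norm_mul, norm_pow, norm_neg, Complex.norm_I, one_mul,
    Complex.norm_natCast, Complex.norm_real, Real.norm_eq_abs]
  have hge : ((n:ℝ)^k * k.factorial : ℝ) ≤ ((∏ j ∈ Finset.range (k+1), (m+1+j*n) : ℕ) : ℝ) := by
    exact_mod_cast prodge m n hn k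
  have hnum : |u|^(m+1+n*k) = |u|^(m+1) * (|u|^n)^k := by
    rw [pow_add, pow_mul]
  rw [hnum]
  have hnk : ((n:ℝ)^k) ≠ 0 := by positivity
  calc (n:ℝ)^k * (|u|^(m+1) * (|u|^n)^k) / ((∏ j ∈ Finset.range (k+1), (m+1+j*n) : ℕ) : ℝ)
      ≤ (n:ℝ)^k * (|u|^(m+1) * (|u|^n)^k) / ((n:ℝ)^k * k.factorial) :=
        div_le_div_of_nonneg_left (by positivity) (by positivity) hge
    _ = |u|^(m+1) * (|u|^n)^k / k.factorial :=
        mul_div_mul_left _ _ hnk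

lemma intbound (p n : ℕ) (u : ℝ) :
    ‖∫ x in (0:ℝ)..u, (x:ℂ)^p * Complex.exp (Complex.I*(x:ℂ)^n)‖ ≤ |u|^p * |u| := by
  have h := intervalIntegral.norm_integral_le_of_norm_le_const (C := |u|^p)
    (f := fun x : ℝ => (x:ℂ)^p * Complex.exp (Complex.I*(x:ℂ)^n)) (a := 0) (b := u) ?_
  · simpa using h
  · intro x hx
    have hxu : |x| ≤ |u| := by
      rw [Set.uIoc] at hx
      obtain ⟨h1, h2⟩ := hx
      refine abs_le.mpr ⟨le_trans (le_min (neg_nonpos.mpr (abs_nonneg u)) (neg_abs_le u)) h1.le,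
        le_trans h2 (max_le (abs_nonneg u) (le_abs_self u))⟩
    have hexp : ‖Complex.exp (Complex.I*(x:ℂ)^n)‖ = 1 := by
      have : Complex.I*(x:ℂ)^n = Complex.I*((x^n : ℝ):ℂ) := by push_cast; ring
      rw [this, Complex.norm_exp]
      simp [Complex.mul_re, ← Complex.ofReal_pow]
    rw [norm_mul, hexp, mul_one, norm_pow, Complex.norm_real, Real.norm_eq_abs]
    exact pow_le_pow_left₀ (abs_nonneg x) hxu p

lemma normrem (m n : ℕ) (hn : 1 ≤ n) (u : ℝ) (K : ℕ) :
    ‖((-Complex.I*(n:ℂ))^(K+1) / ∏ j ∈ Finset.range (K+1), ((m+1+j*n : ℕ):ℂ))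
        * ∫ x in (0:ℝ)..u, (x:ℂ)^(m+n*(K+1)) * Complex.exp (Complex.I*(x:ℂ)^n)‖
      ≤ (n:ℝ) * (|u|^(m+n+1)) * (|u|^n)^K / K.factorial := by
  have hP : (∏ j ∈ Finset.range (K+1), ((m+1+j*n : ℕ):ℂ))
      = ((∏ j ∈ Finset.range (K+1), (m+1+j*n) : ℕ) : ℂ) := by push_cast; rfl
  set P : ℝ := ((∏ j ∈ Finset.range (K+1), (m+1+j*n) : ℕ) : ℝ) with hPdef
  have hPpos : (0:ℝ) < P := by
    rw [hPdef]
    have : 0 < ∏ j ∈ Finset.range (K+1), (m+1+j*n) := Finset.prod_pos fun j _ => by omega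
    exact_mod_cast this
  have hge : ((n:ℝ)^K * K.factorial : ℝ) ≤ P := by rw [hPdef]; exact_mod_cast prodge m n hn K
  have h1 : ‖((-Complex.I*(n:ℂ))^(K+1) / ∏ j ∈ Finset.range (K+1), ((m+1+j*n : ℕ):ℂ))‖
      = (n:ℝ)^(K+1) / P := by
    rw [hP, norm_div, norm_pow, norm_mul, norm_neg, Complex.norm_I, one_mul]
    simp only [Complex.norm_natCast]
    rfl
  rw [norm_mul, h1]
  have h2 := intbound (m+n*(K+1)) n u
  have hnk : ((n:ℝ)^K) ≠ 0 := by positivity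
  calc (n:ℝ)^(K+1) / P * ‖∫ x in (0:ℝ)..u, (x:ℂ)^(m+n*(K+1)) * Complex.exp (Complex.I*(x:ℂ)^n)‖
      ≤ (n:ℝ)^(K+1) / P * (|u|^(m+n*(K+1)) * |u|) :=
        mul_le_mul_of_nonneg_left h2 (by positivity)
    _ ≤ (n:ℝ)^(K+1) / ((n:ℝ)^K * K.factorial) * (|u|^(m+n*(K+1)) * |u|) := by
        apply mul_le_mul_of_nonneg_right _ (by positivity)
        exact div_le_div_of_nonneg_left (by positivity) (by positivity) hge
    _ = (n:ℝ) * (|u|^(m+n+1)) * (|u|^n)^K / K.factorial := by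
        rw [show m+n*(K+1) = (m+n)+n*K from by ring,
          pow_add |u| (m+n) (n*K), pow_mul |u| n K]
        have hf : (K.factorial : ℝ) ≠ 0 := by positivity
        field_simp
        ring

/-- Kummer transformation of the confluent hypergeometric representation of
`∫_0^u x^m exp(i x^n) dx`. -/
theorem stmt11 (m n : ℕ) (hn : 1 ≤ n) (u : ℝ) :
    Summable (fun k : ℕ => (-Complex.I * (n : ℂ)) ^ k * (u : ℂ) ^ (m + 1 + n * k) /
        ∏ j ∈ Finset.range (k + 1), ((m + 1 + j * n : ℕ) : ℂ)) ∧
    ∫ x in (0:ℝ)..u, (x : ℂ) ^ m * Complex.exp (Complex.I * (x : ℂ) ^ n) =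
      Complex.exp (Complex.I * (u : ℂ) ^ n) *
        ∑' k : ℕ, (-Complex.I * (n : ℂ)) ^ k * (u : ℂ) ^ (m + 1 + n * k) /
          ∏ j ∈ Finset.range (k + 1), ((m + 1 + j * n : ℕ) : ℂ) := by
  set b : ℕ → ℂ := fun k => (-Complex.I * (n : ℂ)) ^ k * (u : ℂ) ^ (m + 1 + n * k) /
      ∏ j ∈ Finset.range (k + 1), ((m + 1 + j * n : ℕ) : ℂ) with hbdef
  have hsum : Summable b := by
    apply Summable.of_norm
    apply Summable.of_nonneg_of_le (fun k => norm_nonneg _) (normb m n hn u)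
    have := (Real.summable_pow_div_factorial (|u|^n)).mul_left (|u|^(m+1))
    simpa [mul_div_assoc] using this
  refine ⟨hsum, ?_⟩
  have hrem : Tendsto (fun K : ℕ =>
      ((-Complex.I*(n:ℂ))^K / ∏ j ∈ Finset.range K, ((m+1+j*n : ℕ):ℂ))
        * ∫ x in (0:ℝ)..u, (x:ℂ)^(m+n*K) * Complex.exp (Complex.I*(x:ℂ)^n)) atTop (𝓝 0) := by
    rw [← tendsto_add_atTop_iff_nat 1]
    apply squeeze_zero_norm (normrem m n hn u)
    have := (FloorSemiring.tendsto_pow_div_factorial_atTop (K := ℝ) (|u|^n)).const_mul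
      ((n:ℝ) * |u|^(m+n+1))
    simpa [mul_div_assoc] using this
  have hlim1 : Tendsto (fun K : ℕ => Complex.exp (Complex.I * (u:ℂ)^n) *
      ∑ k ∈ Finset.range K, b k) atTop
      (𝓝 (Complex.exp (Complex.I * (u:ℂ)^n) * ∑' k, b k)) :=
    hsum.hasSum.tendsto_sum_nat.const_mul _
  have hlim2 : Tendsto (fun K : ℕ => Complex.exp (Complex.I * (u:ℂ)^n) *
      ∑ k ∈ Finset.range K, b k) atTop
      (𝓝 (∫ x in (0:ℝ)..u, (x : ℂ) ^ m * Complex.exp (Complex.I * (x : ℂ) ^ n))) := by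
    have heq : (fun K : ℕ => Complex.exp (Complex.I * (u:ℂ)^n) * ∑ k ∈ Finset.range K, b k)
        = fun K : ℕ => (∫ x in (0:ℝ)..u, (x : ℂ) ^ m * Complex.exp (Complex.I * (x : ℂ) ^ n))
          - ((-Complex.I*(n:ℂ))^K / ∏ j ∈ Finset.range K, ((m+1+j*n : ℕ):ℂ))
            * ∫ x in (0:ℝ)..u, (x:ℂ)^(m+n*K) * Complex.exp (Complex.I*(x:ℂ)^n) := by
      funext K
      rw [steps m n hn u K]
      ring
    rw [heq]
    simpa using tendsto_const_nhds.sub hrem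
  exact tendsto_nhds_unique hlim2 hlim1
end

section
/- Let m, n be natural numbers with n ≥ 1, and let F : ℕ → ℝ → ℂ satisfy F 0 u = u^m · e^{i u^n} for all real u, and F (j+1) u = ∫_{0}^{u} F j x dx for all j and all real u. Then for every k ≥ 1 and every real u, F k u = Σ_{l=0}^{∞} i^l · u^{m+nl+k} / ( l! · ∏_{r=1}^{k} (m+nl+r) ), where the series converges. -/
open Complex intervalIntegral

private lemma stmt12_bound (m n k l : ℕ) (u x : ℝ) (hx : |x| ≤ |u|) :
    ‖Complex.I ^ l * (x : ℂ) ^ (m + n * l + k) /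
        ((l.factorial : ℂ) * ∏ r ∈ Finset.Icc 1 k, ((m + n * l + r : ℕ) : ℂ))‖ ≤
      |u| ^ (m + k) * ((|u| ^ n) ^ l / l.factorial) := by
  have hQ : 1 ≤ ∏ r ∈ Finset.Icc 1 k, (m + n * l + r) := by
    apply Finset.one_le_prod'
    intro r hr
    have : 1 ≤ r := (Finset.mem_Icc.mp hr).1
    omega
  have hnorm : ‖Complex.I ^ l * (x : ℂ) ^ (m + n * l + k) /
      ((l.factorial : ℂ) * ∏ r ∈ Finset.Icc 1 k, ((m + n * l + r : ℕ) : ℂ))‖ =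
      |x| ^ (m + n * l + k) /
        ((l.factorial : ℝ) * ∏ r ∈ Finset.Icc 1 k, (m + n * l + r)) := by
    rw [← Nat.cast_prod, ← Nat.cast_mul, norm_div, norm_mul, norm_pow, norm_pow,
      Complex.norm_I, one_pow, one_mul, Complex.norm_real, Real.norm_eq_abs,
      Complex.norm_natCast, Nat.cast_mul, Nat.cast_prod]
  rw [hnorm]
  have h1 : |x| ^ (m + n * l + k) ≤ |u| ^ (m + k) * (|u| ^ n) ^ l := by
    calc |x| ^ (m + n * l + k) ≤ |u| ^ (m + n * l + k) :=
          pow_le_pow_left₀ (abs_nonneg x) hx _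
    _ = |u| ^ (m + k) * (|u| ^ n) ^ l := by
          rw [← pow_mul, ← pow_add]; ring_nf
  have h2 : (l.factorial : ℝ) ≤
      (l.factorial : ℝ) * ((∏ r ∈ Finset.Icc 1 k, (m + n * l + r) : ℕ) : ℝ) := by
    have h3 : (1 : ℝ) ≤ ((∏ r ∈ Finset.Icc 1 k, (m + n * l + r) : ℕ) : ℝ) := by
      exact_mod_cast hQ
    nlinarith [(Nat.cast_pos (α := ℝ)).mpr l.factorial_pos]
  rw [← mul_div_assoc]
  exact div_le_div₀ (by positivity) h1 (by exact_mod_cast l.factorial_pos) h2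

private lemma stmt12_summable (m n k : ℕ) (u : ℝ) :
    Summable (fun l : ℕ => Complex.I ^ l * (u : ℂ) ^ (m + n * l + k) /
        ((l.factorial : ℂ) * ∏ r ∈ Finset.Icc 1 k, ((m + n * l + r : ℕ) : ℂ))) := by
  apply Summable.of_norm
  apply Summable.of_nonneg_of_le (fun l => norm_nonneg _)
    (fun l => stmt12_bound m n k l u u le_rfl)
  exact (Real.summable_pow_div_factorial (|u| ^ n)).mul_left _

private lemma stmt12_monomial (p : ℕ) (u : ℝ) :
    ∫ x in (0:ℝ)..u, ((x : ℂ)) ^ p = (u : ℂ) ^ (p + 1) / ((p : ℂ) + 1) := by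
  have hne : ((p : ℂ) + 1) ≠ 0 := Nat.cast_add_one_ne_zero p
  have hd : ∀ x ∈ Set.uIcc (0:ℝ) u,
      HasDerivAt (fun y : ℝ => ((y : ℂ)) ^ (p + 1) / ((p : ℂ) + 1)) ((x : ℂ) ^ p) x := by
    intro x _
    have h1 : HasDerivAt (fun z : ℂ => z ^ (p + 1)) ((↑(p + 1) : ℂ) * (x : ℂ) ^ p) (x : ℂ) := by
      simpa using hasDerivAt_pow (p + 1) ((x : ℂ))
    have h2 := (h1.comp_ofReal).div_const ((p : ℂ) + 1)
    refine h2.congr_deriv ?_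
    rw [div_eq_iff hne]; push_cast; ring
  have hint : IntervalIntegrable (fun x : ℝ => ((x : ℂ)) ^ p) MeasureTheory.volume 0 u :=
    Continuous.intervalIntegrable (by fun_prop) 0 u
  rw [intervalIntegral.integral_eq_sub_of_hasDerivAt hd hint]
  norm_num

private lemma stmt12_main (m n : ℕ) (F : ℕ → ℝ → ℂ)
    (hF0 : ∀ u : ℝ, F 0 u = (u : ℂ) ^ m * Complex.exp (Complex.I * (u : ℂ) ^ n))
    (hFs : ∀ j : ℕ, ∀ u : ℝ, F (j + 1) u = ∫ x in (0:ℝ)..u, F j x) :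
    ∀ k : ℕ, ∀ u : ℝ,
      F k u = ∑' l : ℕ, Complex.I ^ l * (u : ℂ) ^ (m + n * l + k) /
          ((l.factorial : ℂ) * ∏ r ∈ Finset.Icc 1 k, ((m + n * l + r : ℕ) : ℂ)) := by
  intro k
  induction k with
  | zero =>
    intro u
    rw [hF0, Complex.exp_eq_exp_ℂ, NormedSpace.exp_eq_tsum_div, ← tsum_mul_left]
    refine tsum_congr fun l => ?_
    rw [Finset.Icc_eq_empty (by omega), Finset.prod_empty, mul_one]
    rw [mul_pow, ← pow_mul, pow_add, pow_add]
    push_cast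
    ring
  | succ k ih =>
    intro u
    rw [hFs]
    set c : ℕ → ℂ := fun l =>
      (l.factorial : ℂ) * ∏ r ∈ Finset.Icc 1 k, ((m + n * l + r : ℕ) : ℂ) with hc
    have hc0 : ∀ l, c l ≠ 0 := by
      intro l
      apply mul_ne_zero
      · exact_mod_cast l.factorial_ne_zero
      · apply Finset.prod_ne_zero_iff.mpr
        intro r hr
        have : 1 ≤ r := (Finset.mem_Icc.mp hr).1
        exact_mod_cast by omega
    set f : ℕ → C(ℝ, ℂ) := fun l =>
      ⟨fun x => Complex.I ^ l * (x : ℂ) ^ (m + n * l + k) / c l, by fun_prop⟩ with hf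
    have hsum : Summable fun l : ℕ =>
        ‖(f l).restrict (⟨Set.uIcc 0 u, isCompact_uIcc⟩ : TopologicalSpace.Compacts ℝ)‖ := by
      apply Summable.of_nonneg_of_le (fun l => norm_nonneg _) (fun l => ?_)
        ((Real.summable_pow_div_factorial (|u| ^ n)).mul_left (|u| ^ (m + k)))
      rw [ContinuousMap.norm_le _ (by positivity)]
      rintro ⟨x, hx⟩
      have hx' : |x| ≤ |u| := by
        rw [abs_le]
        rcases Set.mem_uIcc.mp hx with ⟨h1, h2⟩ | ⟨h1, h2⟩ <;>
          constructor <;> linarith [le_abs_self u, neg_abs_le u]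
      exact stmt12_bound m n k l u x hx'
    have key : (∫ x in (0:ℝ)..u, F k x) = ∑' l : ℕ, ∫ x in (0:ℝ)..u, f l x := by
      rw [intervalIntegral.tsum_intervalIntegral_eq_of_summable_norm hsum]
      apply intervalIntegral.integral_congr
      intro x _
      rw [ih x]
      rfl
    rw [key]
    refine tsum_congr fun l => ?_
    have hrw : ∀ x : ℝ, f l x = (Complex.I ^ l / c l) * (x : ℂ) ^ (m + n * l + k) := by
      intro x
      show Complex.I ^ l * (x : ℂ) ^ (m + n * l + k) / c l = _
      ring
    simp_rw [hrw]
    rw [intervalIntegral.integral_const_mul, stmt12_monomial]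
    rw [Finset.prod_Icc_succ_top (by omega : 1 ≤ k + 1)]
    have hp1 : ((m + n * l + k : ℕ) : ℂ) + 1 = ((m + n * l + (k + 1) : ℕ) : ℂ) := by
      push_cast; ring
    have hne : ((m + n * l + (k + 1) : ℕ) : ℂ) ≠ 0 := by
      exact_mod_cast (by omega : m + n * l + (k + 1) ≠ 0)
    rw [hp1]
    have hexp : m + n * l + (k + 1) = (m + n * l + k) + 1 := by omega
    rw [hexp]
    simp only [hc]
    field_simp

/-- The `k`-fold repeated integral (all lower limits 0) of `x^m exp(i x^n)` as a convergent
series. -/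
theorem stmt12 (m n : ℕ) (hn : 1 ≤ n) (F : ℕ → ℝ → ℂ)
    (hF0 : ∀ u : ℝ, F 0 u = (u : ℂ) ^ m * Complex.exp (Complex.I * (u : ℂ) ^ n))
    (hFs : ∀ j : ℕ, ∀ u : ℝ, F (j + 1) u = ∫ x in (0:ℝ)..u, F j x) :
    ∀ k : ℕ, 1 ≤ k → ∀ u : ℝ,
      Summable (fun l : ℕ => Complex.I ^ l * (u : ℂ) ^ (m + n * l + k) /
          ((l.factorial : ℂ) * ∏ r ∈ Finset.Icc 1 k, ((m + n * l + r : ℕ) : ℂ))) ∧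
      F k u = ∑' l : ℕ, Complex.I ^ l * (u : ℂ) ^ (m + n * l + k) /
          ((l.factorial : ℂ) * ∏ r ∈ Finset.Icc 1 k, ((m + n * l + r : ℕ) : ℂ)) := by
  intro k _ u
  exact ⟨stmt12_summable m n k u, stmt12_main m n F hF0 hFs k u⟩
end

section
/- Let k be a rational number and let f be a formal power series over ℚ with constant coefficient 0 satisfying f + k·f² = X. Then for every j ≥ 1, the coefficient of f at degree j equals C_{j-1} · (−k)^{j−1}, where C_m = binomial(2m, m)/(m+1) is the m-th Catalan number. -/
open PowerSeries Finset

lemma stmt15_aux (k : ℚ) (f : PowerSeries ℚ)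
    (h0 : PowerSeries.constantCoeff f = 0)
    (hf : f + PowerSeries.C k * f ^ 2 = PowerSeries.X) :
    ∀ j : ℕ, 1 ≤ j → PowerSeries.coeff j f = (catalan (j - 1) : ℚ) * (-k) ^ (j - 1) := by
  have hc0 : PowerSeries.coeff 0 f = 0 := by simpa using h0
  intro j
  induction j using Nat.strong_induction_on with
  | _ j ih =>
    intro hj
    have key := congrArg (PowerSeries.coeff j) hf
    rw [map_add, PowerSeries.coeff_X, PowerSeries.coeff_C_mul, sq,
      PowerSeries.coeff_mul, Finset.Nat.sum_antidiagonal_eq_sum_range_succ_mk] at key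
    match j, hj with
    | 1, _ =>
      simp [Finset.sum_range_succ, hc0] at key
      simpa using key
    | (n+2), _ =>
      have hX : (if n + 2 = 1 then (1:ℚ) else 0) = 0 := by simp
      rw [hX] at key
      rw [Finset.sum_range_succ] at key
      have hlast : PowerSeries.coeff (n+2) f * PowerSeries.coeff (n+2-(n+2)) f = 0 := by
        simp [hc0]
      rw [hlast, add_zero, Finset.sum_range_succ'] at key
      have hfirst : PowerSeries.coeff 0 f * PowerSeries.coeff (n+2-0) f = 0 := by
        simp [hc0]
      rw [hfirst, add_zero] at key
      have hsum : ∑ i ∈ Finset.range (n+1),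
          PowerSeries.coeff (i+1) f * PowerSeries.coeff (n+2-(i+1)) f
          = (catalan (n+1) : ℚ) * (-k) ^ n := by
        have : ∀ i ∈ Finset.range (n+1),
            PowerSeries.coeff (i+1) f * PowerSeries.coeff (n+2-(i+1)) f
            = ((catalan i : ℚ) * (catalan (n-i) : ℚ)) * (-k) ^ n := by
          intro i hi
          rw [Finset.mem_range] at hi
          have h1 : PowerSeries.coeff (i+1) f = (catalan i : ℚ) * (-k) ^ i := by
            have := ih (i+1) (by omega) (by omega)
            simpa using this
          have h2 : n + 2 - (i+1) = (n - i) + 1 := by omega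
          have h3 : PowerSeries.coeff ((n-i)+1) f
              = (catalan (n-i) : ℚ) * (-k) ^ (n-i) := by
            have := ih ((n-i)+1) (by omega) (by omega)
            simpa using this
          rw [h1, h2, h3]
          have hexp : (-k) ^ i * (-k) ^ (n - i) = (-k) ^ n := by
            rw [← pow_add]; congr 1; omega
          rw [mul_mul_mul_comm, hexp]
        rw [Finset.sum_congr rfl this, ← Finset.sum_mul]
        congr 1
        rw [catalan_succ]
        rw [Fin.sum_univ_eq_sum_range (fun i => catalan i * catalan (n - i))]
        push_cast
        rfl
      rw [hsum] at key
      have : PowerSeries.coeff (n+2) f = -(k * ((catalan (n+1) : ℚ) * (-k) ^ n)) := by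
        linarith
      rw [this]
      norm_num
      ring

/-- The reversion coefficients of `y = x + k x²` are Catalan numbers times powers of `-k`:
`β_j = C_{j-1} (-k)^{j-1}` with `C_m = binomial(2m, m)/(m+1)`. -/
theorem stmt15 (k : ℚ) (f : PowerSeries ℚ)
    (h0 : PowerSeries.constantCoeff f = 0)
    (hf : f + PowerSeries.C k * f ^ 2 = PowerSeries.X) :
    ∀ j : ℕ, 1 ≤ j →
      PowerSeries.coeff j f =
        ((Nat.choose (2 * (j - 1)) (j - 1) : ℚ) / ((j - 1 : ℕ) + 1 : ℚ)) * (-k) ^ (j - 1) := by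
  intro j hj
  rw [stmt15_aux k f h0 hf j hj]
  congr 1
  have h := succ_mul_catalan_eq_centralBinom (j - 1)
  rw [Nat.centralBinom] at h
  have hne : ((j - 1 : ℕ) + 1 : ℚ) ≠ 0 := by positivity
  rw [eq_comm, div_eq_iff hne]
  exact_mod_cast ((mul_comm _ _).trans h).symm
end

section
/- Let f be a formal power series over ℚ with constant coefficient 0 satisfying f + f³ = X. Then the coefficient of f at every even degree is 0, the coefficient at degree 1 is 1, and the coefficients γ_k := (coefficient of f at degree 2k−1) satisfy the two-term recurrence (2k−1)(2k−2)·γ_k + 3(3k−4)(3k−5)·γ_{k−1} = 0 for all k ≥ 2. -/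
open PowerSeries Finset

/-- Reversion of `y = x + x³`: even coefficients vanish, the first coefficient is 1, and the
non-vanishing coefficients `γ_k = β_{2k-1}` satisfy
`(2k-1)(2k-2) γ_k + 3(3k-4)(3k-5) γ_{k-1} = 0` for `k ≥ 2`. -/
theorem stmt16 (f : PowerSeries ℚ) (h0 : PowerSeries.constantCoeff f = 0)
    (hf : f + f ^ 3 = PowerSeries.X) :
    (∀ j : ℕ, Even j → PowerSeries.coeff j f = 0) ∧
    PowerSeries.coeff 1 f = 1 ∧
    ∀ k : ℕ, 2 ≤ k →
      ((2 * k - 1 : ℕ) : ℚ) * ((2 * k - 2 : ℕ) : ℚ) * PowerSeries.coeff (2 * k - 1) f +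
        3 * ((3 * k - 4 : ℕ) : ℚ) * ((3 * k - 5 : ℕ) : ℚ) *
          PowerSeries.coeff (2 * (k - 1) - 1) f = 0 := by
  -- basic coefficient facts
  have hc0 : coeff 0 f = 0 := by rw [coeff_zero_eq_constantCoeff]; exact h0
  have hcube : ∀ n : ℕ, coeff n f +
      ∑ p ∈ antidiagonal n, coeff p.1 f *
        ∑ q ∈ antidiagonal p.2, coeff q.1 f * coeff q.2 f
      = coeff n X := by
    intro n
    have h := congrArg (coeff n) hf
    rw [show f^3 = f * (f * f) by ring] at h
    rw [map_add, coeff_mul] at h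
    simpa only [coeff_mul] using h
  -- even coefficients vanish
  have heven : ∀ n : ℕ, Even n → coeff n f = 0 := by
    intro n
    induction n using Nat.strong_induction_on with
    | _ n ih =>
      intro hn
      rcases Nat.eq_zero_or_pos n with rfl | hnpos
      · exact hc0
      have hn2 : n % 2 = 0 := Nat.even_iff.mp hn
      have key : ∀ a b c : ℕ, a + b + c = n →
          coeff a f * (coeff b f * coeff c f) = 0 := by
        intro a b c habc
        have hpar : a % 2 = 0 ∨ b % 2 = 0 ∨ c % 2 = 0 := by omega
        rcases hpar with h | h | h
        · rcases Nat.lt_or_ge a n with hlt | hge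
          · rw [ih a hlt (Nat.even_iff.mpr h)]; ring
          · have hb : b = 0 := by omega
            subst hb; rw [hc0]; ring
        · rcases Nat.lt_or_ge b n with hlt | hge
          · rw [ih b hlt (Nat.even_iff.mpr h)]; ring
          · have ha : a = 0 := by omega
            subst ha; rw [hc0]; ring
        · rcases Nat.lt_or_ge c n with hlt | hge
          · rw [ih c hlt (Nat.even_iff.mpr h)]; ring
          · have ha : a = 0 := by omega
            subst ha; rw [hc0]; ring
      have h := hcube n
      rw [coeff_X, if_neg (by omega : ¬ n = 1)] at h
      rw [Finset.sum_eq_zero, add_zero] at h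
      · exact h
      · intro p hp
        rw [Finset.mul_sum]
        refine Finset.sum_eq_zero fun q hq => ?_
        exact key p.1 q.1 q.2 (by
          have h1 := Finset.HasAntidiagonal.mem_antidiagonal.mp hp
          have h2 := Finset.HasAntidiagonal.mem_antidiagonal.mp hq
          omega)
  -- first coefficient equals 1
  have hone : coeff 1 f = 1 := by
    have h := hcube 1
    rw [coeff_X, if_pos rfl] at h
    rw [Finset.sum_eq_zero, add_zero] at h
    · exact h
    · intro p hp
      rw [Finset.mul_sum]
      refine Finset.sum_eq_zero fun q hq => ?_
      have h1 := Finset.HasAntidiagonal.mem_antidiagonal.mp hp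
      have h2 := Finset.HasAntidiagonal.mem_antidiagonal.mp hq
      rcases (by omega : p.1 = 0 ∨ q.1 = 0) with h' | h'
      · rw [h', hc0]; ring
      · rw [h', hc0]; ring
  -- first derivative relation : f' (1 + 3 f²) = 1
  have hd1 : (d⁄dX ℚ) f * (1 + 3 * f^2) = 1 := by
    have h := congrArg (d⁄dX ℚ) hf
    rw [map_add, Derivation.leibniz_pow, derivative_X] at h
    simp only [smul_eq_mul] at h
    push_cast at h
    linear_combination h
  -- second derivative relation : f'' (1 + 3 f²) = -6 f (f')²
  have hd2 : (d⁄dX ℚ) ((d⁄dX ℚ) f) * (1 + 3 * f^2) = -6 * f * ((d⁄dX ℚ) f)^2 := by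
    have h3 : (d⁄dX ℚ) (3:ℚ⟦X⟧) = 0 := by
      rw [show (3:ℚ⟦X⟧) = (C (R := ℚ)) 3 from (map_ofNat ((C (R := ℚ))) 3)]; exact derivative_C
    have h := congrArg (d⁄dX ℚ) hd1
    simp only [Derivation.leibniz, Derivation.leibniz_pow, map_add, map_one, map_mul,
      Derivation.map_one_eq_zero, smul_eq_mul, h3] at h
    push_cast at h
    linear_combination h
  -- the linear ODE : (4 + 27 X²) f'' + 27 X f' - 3 f = 0
  have hode : (4 + 27*X^2) * ((d⁄dX ℚ) ((d⁄dX ℚ) f)) + 27*X*((d⁄dX ℚ) f) - 3*f = 0 := by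
    set d := (d⁄dX ℚ) f with hd
    set d2 := (d⁄dX ℚ) d with hdd
    have hu3 : ((1 + 3 * f^2 : ℚ⟦X⟧))^3 ≠ 0 := by
      apply pow_ne_zero
      intro h
      have := congrArg (constantCoeff) h
      simp [h0] at this
    have key : (1 + 3*f^2:ℚ⟦X⟧)^3 * ((4 + 27*(f+f^3)^2) * d2 + 27*(f+f^3)*d - 3*f) = 0 := by
      linear_combination ((4+27*(f+f^3)^2)*(1+3*f^2)^2) * hd2 +
        (-6*(4+27*(f+f^3)^2)*f*(d*(1+3*f^2)+1) + 27*(f+f^3)*(1+3*f^2)^2) * hd1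
    rcases mul_eq_zero.mp key with h | h
    · exact absurd h hu3
    · rw [← hf]; exact h
  -- the two-term recurrence, reparametrized
  have hrec : ∀ j : ℕ, ((2*j+3:ℕ):ℚ)*((2*j+2:ℕ):ℚ) * coeff (2*j+3) f
      + 3*((3*j+2:ℕ):ℚ)*((3*j+1:ℕ):ℚ) * coeff (2*j+1) f = 0 := by
    intro j
    have h := congrArg (coeff (2*j+1)) hode
    have e4 : (4 : ℚ⟦X⟧) = (C (R := ℚ)) 4 := (map_ofNat ((C (R := ℚ))) 4).symm
    have e27 : (27 : ℚ⟦X⟧) = (C (R := ℚ)) 27 := (map_ofNat ((C (R := ℚ))) 27).symm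
    have e3 : (3 : ℚ⟦X⟧) = (C (R := ℚ)) 3 := (map_ofNat ((C (R := ℚ))) 3).symm
    rw [e4, e27, e3, add_mul, mul_assoc, mul_assoc] at h
    simp only [map_add, map_sub, coeff_C_mul, map_zero] at h
    have hXd : (coeff (2*j+1)) (X * (d⁄dX ℚ) f) = coeff (2*j+1) f * (2*j+1) := by
      rw [show 2*j+1 = (2*j)+1 from rfl, coeff_succ_X_mul, coeff_derivative]
      push_cast; ring
    have hdd : (coeff (2*j+1)) ((d⁄dX ℚ) ((d⁄dX ℚ) f))
        = coeff (2*j+3) f * (2*j+3) * (2*j+2) := by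
      rw [coeff_derivative, coeff_derivative]
      push_cast; ring_nf
    have hX2 : (coeff (2*j+1)) (X^2 * (d⁄dX ℚ) ((d⁄dX ℚ) f))
        = coeff (2*j+1) f * (2*j+1) * (2*j) := by
      cases j with
      | zero =>
        rw [coeff_X_pow_mul']
        norm_num
      | succ i =>
        rw [show 2*(i+1)+1 = (2*i+1)+2 by ring, coeff_X_pow_mul, coeff_derivative,
          coeff_derivative]
        push_cast; ring
    rw [hXd, hdd, hX2] at h
    push_cast at h ⊢
    linear_combination h / 4
  refine ⟨heven, hone, ?_⟩
  intro k hk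
  obtain ⟨j, rfl⟩ : ∃ j, k = j + 2 := ⟨k - 2, by omega⟩
  have e1 : 2*(j+2)-1 = 2*j+3 := by omega
  have e2 : 2*(j+2)-2 = 2*j+2 := by omega
  have e3 : 3*(j+2)-4 = 3*j+2 := by omega
  have e4 : 3*(j+2)-5 = 3*j+1 := by omega
  have e5 : 2*((j+2)-1)-1 = 2*j+1 := by omega
  rw [e1, e2, e3, e4, e5]
  linear_combination hrec j
end

section
/- Let f be a formal power series over ℚ with constant coefficient 0 satisfying f + f² + (1/3)·f³ = X. Then for every j ≥ 0, the coefficient of f at degree 2j+1 equals κ_j/3^j and the coefficient at degree 2j+2 equals −λ_j/3^j, where κ_j = 27^j · (5/6)_j · (1/3)_j / ( j! · (3/2)_j ) and λ_j = ((1+3j)/(1+j)) · κ_j, with (a)_j = a(a+1)⋯(a+j−1) the Pochhammer symbol. -/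
/-- `κ_j = 27^j (5/6)_j (1/3)_j / (j! (3/2)_j)`, with `(a)_j` the Pochhammer symbol. -/
noncomputable def kappa (j : ℕ) : ℚ :=
  27 ^ j * Polynomial.eval (5 / 6 : ℚ) (ascPochhammer ℚ j) *
      Polynomial.eval (1 / 3 : ℚ) (ascPochhammer ℚ j) /
    ((j.factorial : ℚ) * Polynomial.eval (3 / 2 : ℚ) (ascPochhammer ℚ j))

/-- `λ_j = ((1+3j)/(1+j)) κ_j`. -/
noncomputable def lambda' (j : ℕ) : ℚ :=
  ((1 + 3 * (j : ℚ)) / (1 + (j : ℚ))) * kappa j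

lemma kappa_succ (j : ℕ) :
    ((j : ℚ) + 1) * (2 * j + 3) * kappa (j + 1)
      = 3 * (6 * j + 5) * (3 * j + 1) * kappa j := by
  have hfac : ((j.factorial : ℚ)) ≠ 0 := by exact_mod_cast j.factorial_ne_zero
  have hp : (0 : ℚ) < Polynomial.eval (3 / 2 : ℚ) (ascPochhammer ℚ j) :=
    ascPochhammer_pos j _ (by norm_num)
  have hp' : Polynomial.eval (3 / 2 : ℚ) (ascPochhammer ℚ j) ≠ 0 := ne_of_gt hp
  simp only [kappa, ascPochhammer_succ_eval, Nat.factorial_succ, Nat.cast_mul, Nat.cast_add,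
    Nat.cast_one, pow_succ]
  field_simp
  ring

open PowerSeries in
/-- Reversion of the cubic chirp polynomial `y = x + x² + x³/3`: the odd coefficients are
`κ_j/3^j` and the even ones are `-λ_j/3^j`. -/
theorem stmt17 (f : PowerSeries ℚ) (h0 : PowerSeries.constantCoeff (R := ℚ) f = 0)
    (hf : f + f ^ 2 + PowerSeries.C (R := ℚ) (1 / 3) * f ^ 3 = PowerSeries.X) :
    ∀ j : ℕ,
      PowerSeries.coeff (R := ℚ) (2 * j + 1) f = kappa j / 3 ^ j ∧
      PowerSeries.coeff (R := ℚ) (2 * j + 2) f = -lambda' j / 3 ^ j := by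
  -- Step 1: (1+f)^3 = 1 + 3X
  have hC : (PowerSeries.C (R := ℚ) (1 / 3)) * 3 = 1 := by
    rw [show (3 : ℚ⟦X⟧) = PowerSeries.C 3 from (map_ofNat (PowerSeries.C) 3).symm,
      ← map_mul]
    norm_num
  have h3 : (1 + f) ^ 3 = 1 + 3 * X := by
    linear_combination 3 * hf - f ^ 3 * hC
  -- Step 2: differentiate
  have hD3 : (3 : ℕ) • ((1 + f) ^ 2 • d⁄dX ℚ f) = (3 : ℚ⟦X⟧) := by
    have h := congrArg (d⁄dX ℚ) h3
    rw [Derivation.leibniz_pow] at h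
    rw [map_add, map_add, Derivation.map_one_eq_zero, zero_add, zero_add,
      Derivation.leibniz, derivative_X] at h
    have hd3 : (d⁄dX ℚ) (3 : ℚ⟦X⟧) = 0 := by
      rw [show (3 : ℚ⟦X⟧) = ((3 : ℕ) : ℚ⟦X⟧) by norm_cast]
      exact Derivation.map_natCast _ 3
    rw [hd3] at h
    simpa using h
  have hD : (1 + f) ^ 2 * d⁄dX ℚ f = 1 := by
    have h30 : (3 : ℚ⟦X⟧) ≠ 0 := by
      intro h
      have h' := congrArg (PowerSeries.constantCoeff) h
      rw [map_ofNat, map_zero] at h'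
      norm_num at h'
    apply mul_left_cancel₀ h30
    calc (3 : ℚ⟦X⟧) * ((1 + f) ^ 2 * d⁄dX ℚ f)
        = (3 : ℕ) • ((1 + f) ^ 2 • d⁄dX ℚ f) := by
          rw [smul_eq_mul, nsmul_eq_mul]; norm_num
      _ = 3 := hD3
      _ = 3 * 1 := by ring
  -- Step 3: (1 + 3X) * f' = 1 + f
  have key : (1 + 3 * X) * d⁄dX ℚ f = 1 + f := by
    calc (1 + 3 * X) * d⁄dX ℚ f = (1 + f) ^ 3 * d⁄dX ℚ f := by rw [h3]
      _ = (1 + f) * ((1 + f) ^ 2 * d⁄dX ℚ f) := by ring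
      _ = 1 + f := by rw [hD, mul_one]
  -- Step 4: coefficient recurrences
  have hrec : ∀ n : ℕ, PowerSeries.coeff n (d⁄dX ℚ f)
      + 3 * PowerSeries.coeff n (X * d⁄dX ℚ f)
      = PowerSeries.coeff n (1 : ℚ⟦X⟧) + PowerSeries.coeff n f := by
    intro n
    have h := congrArg (PowerSeries.coeff n) key
    rw [add_mul, one_mul, mul_assoc, map_add, map_add,
      show (3 : ℚ⟦X⟧) = PowerSeries.C 3 from (map_ofNat (PowerSeries.C) 3).symm,
      PowerSeries.coeff_C_mul] at h
    exact h
  have rec1 : PowerSeries.coeff 1 f = 1 := by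
    have h := hrec 0
    rw [PowerSeries.coeff_zero_X_mul, PowerSeries.coeff_derivative] at h
    rw [PowerSeries.coeff_zero_eq_constantCoeff_apply f, h0] at h
    norm_num at h
    exact h
  have rec2 : ∀ n : ℕ, PowerSeries.coeff (n + 2) f * ((n : ℚ) + 2)
      = (1 - 3 * ((n : ℚ) + 1)) * PowerSeries.coeff (n + 1) f := by
    intro n
    have h := hrec (n + 1)
    rw [PowerSeries.coeff_succ_X_mul, PowerSeries.coeff_derivative,
      PowerSeries.coeff_derivative] at h
    have hone : PowerSeries.coeff (n + 1) (1 : ℚ⟦X⟧) = 0 := by simp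
    rw [hone] at h
    push_cast at h ⊢
    linear_combination h
  -- kappa recurrence in solved form
  have kappa_succ' : ∀ j : ℕ, kappa (j + 1)
      = 3 * (6 * (j : ℚ) + 5) * (3 * j + 1) / (((j : ℚ) + 1) * (2 * j + 3)) * kappa j := by
    intro j
    have hden : (((j : ℚ) + 1) * (2 * j + 3)) ≠ 0 := by positivity
    rw [div_mul_eq_mul_div, eq_div_iff hden]
    linear_combination kappa_succ j
  -- Step 5: induction
  intro j
  induction j with
  | zero =>
    have hk0 : kappa 0 = 1 := by simp [kappa]
    have hl0 : lambda' 0 = 1 := by simp [lambda', hk0]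
    constructor
    · simpa [hk0] using rec1
    · have h := rec2 0
      rw [rec1] at h
      norm_num at h
      rw [show (2 : ℕ) * 0 + 2 = 0 + 2 from by omega, hl0]
      norm_num
      linarith
  | succ j ih =>
    obtain ⟨ih1, ih2⟩ := ih
    have h3j : (3 : ℚ) ^ j ≠ 0 := by positivity
    have hj1 : ((j : ℚ) + 1) ≠ 0 := by positivity
    have hj1' : (1 + (j : ℚ)) ≠ 0 := by positivity
    have hj23 : (2 * (j : ℚ) + 3) ≠ 0 := by positivity
    have hodd : PowerSeries.coeff (2 * (j + 1) + 1) f = kappa (j + 1) / 3 ^ (j + 1) := by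
      rw [show 2 * (j + 1) + 1 = 2 * j + 1 + 2 from by omega, kappa_succ']
      have h := rec2 (2 * j + 1)
      rw [show 2 * j + 1 + 1 = 2 * j + 2 from rfl, ih2, lambda'] at h
      have hb : ((2 * j + 1 : ℕ) : ℚ) + 2 ≠ 0 := by push_cast; positivity
      apply mul_right_cancel₀ hb
      rw [h]
      push_cast
      rw [pow_succ]
      field_simp
      ring
    refine ⟨hodd, ?_⟩
    have h := rec2 (2 * j + 2)
    rw [show 2 * j + 2 + 1 = 2 * (j + 1) + 1 from by omega, hodd] at h
    rw [show 2 * (j + 1) + 2 = 2 * j + 2 + 2 from by omega, lambda', kappa_succ']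
    have hb : ((2 * j + 2 : ℕ) : ℚ) + 2 ≠ 0 := by push_cast; positivity
    apply mul_right_cancel₀ hb
    rw [h, kappa_succ']
    push_cast
    rw [pow_succ]
    have hj2 : ((j : ℚ) + 2) ≠ 0 := by positivity
    have hj2' : (1 + ((j : ℚ) + 1)) ≠ 0 := by positivity
    field_simp
    ring
end

section
/- Let f be a formal power series over ℚ with constant coefficient 0 satisfying f + 3f² + 4f³ + 2f⁴ = X, and write c_j for the coefficient of f at degree j. Then c_1 = 1 and j·c_j + 2(4j−5)·c_{j−1} = 0 for all j ≥ 2; equivalently c_j = (−1)^{j+1}·η_j where η_1 = 1 and j·η_j = 2(4j−5)·η_{j−1} (so η = 1, 3, 14, 77, 462, …). -/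
/-- The sequence `η` (OEIS A048779): `η_1 = 1` and `j η_j = 2(4j-5) η_{j-1}`,
so `η = 1, 3, 14, 77, 462, …`. -/
def eta : ℕ → ℚ
  | 0 => 0
  | 1 => 1
  | (j + 2) => 2 * (4 * ((j : ℚ) + 2) - 5) / ((j : ℚ) + 2) * eta (j + 1)

open PowerSeries in
/-- Reversion of the quartic chirp polynomial `y = x + 3x² + 4x³ + 2x⁴`: the coefficients `c_j`
satisfy `c_1 = 1`, `j c_j + 2(4j-5) c_{j-1} = 0` for `j ≥ 2`, and `c_j = (-1)^{j+1} η_j`. -/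
theorem stmt18 (f : PowerSeries ℚ) (h0 : PowerSeries.constantCoeff f = 0)
    (hf : f + PowerSeries.C (3 : ℚ) * f ^ 2 + PowerSeries.C (4 : ℚ) * f ^ 3 +
        PowerSeries.C (2 : ℚ) * f ^ 4 = PowerSeries.X) :
    PowerSeries.coeff 1 f = 1 ∧
    (∀ j : ℕ, 2 ≤ j →
      (j : ℚ) * PowerSeries.coeff j f +
        2 * (4 * (j : ℚ) - 5) * PowerSeries.coeff (j - 1) f = 0) ∧
    ∀ j : ℕ, 1 ≤ j → PowerSeries.coeff j f = (-1 : ℚ) ^ (j + 1) * eta j := by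
  set u : ℚ⟦X⟧ := 1 + 2 * f with hu
  have h4 : u ^ 4 = 1 + 8 * X := by
    simp only [map_ofNat] at hf
    rw [hu]
    linear_combination (8 : ℚ⟦X⟧) * hf
  have h8 : d⁄dX ℚ (8 : ℚ⟦X⟧) = 0 := by rw [← map_ofNat C 8, derivative_C]
  have hd : d⁄dX ℚ (u ^ 4) = d⁄dX ℚ (1 + 8 * X) := by rw [h4]
  simp [Derivation.leibniz_pow, smul_eq_mul, h8] at hd
  have heq : 4 * d⁄dX ℚ u + 32 * (X * d⁄dX ℚ u) = 8 * u := by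
    linear_combination u * hd - 4 * d⁄dX ℚ u * h4
  -- coefficients of u in terms of f
  have hcu : ∀ n : ℕ, 1 ≤ n → coeff n u = 2 * coeff n f := by
    intro n hn
    rw [hu]
    rw [map_add, ← map_ofNat C 2, coeff_C_mul, coeff_one, if_neg (by omega)]
    ring
  have hcu0 : coeff 0 u = 1 := by
    rw [hu, map_add, ← map_ofNat C 2, coeff_C_mul, coeff_one, if_pos rfl,
      coeff_zero_eq_constantCoeff, h0]
    ring
  -- coefficient 0 of heq : c1 = 1
  have hc1 : coeff 1 f = 1 := by
    have h := congrArg (coeff 0) heq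
    have hx : coeff 0 (X * d⁄dX ℚ u) = 0 := by
      simp [coeff_zero_eq_constantCoeff]
    simp only [map_add, ← map_ofNat C 4, ← map_ofNat C 32, ← map_ofNat C 8,
      coeff_C_mul, hx, coeff_derivative, mul_zero, add_zero, Nat.cast_zero,
      coeff_zero_eq_constantCoeff] at h
    rw [← coeff_zero_eq_constantCoeff, hcu0, hcu 1 le_rfl] at h
    linear_combination h / 8
  -- general recurrence from coefficient m+1 of heq
  have hrec : ∀ m : ℕ, ((m : ℚ) + 2) * coeff (m + 2) f
      + (8 * (m : ℚ) + 6) * coeff (m + 1) f = 0 := by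
    intro m
    have h := congrArg (coeff (m + 1)) heq
    simp only [map_add, ← map_ofNat C 4, ← map_ofNat C 32, ← map_ofNat C 8,
      coeff_C_mul, coeff_succ_X_mul, coeff_derivative] at h
    rw [show m + 1 + 1 = m + 2 from rfl] at h
    rw [hcu (m + 2) (by omega), hcu (m + 1) (by omega)] at h
    push_cast at h
    linear_combination h / 8
  refine ⟨hc1, ?_, ?_⟩
  · intro j hj
    obtain ⟨m, rfl⟩ : ∃ m, j = m + 2 := ⟨j - 2, by omega⟩
    have := hrec m
    rw [show m + 2 - 1 = m + 1 from rfl]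
    push_cast
    linarith
  · intro j hj
    induction j with
    | zero => omega
    | succ n ih =>
      rcases Nat.eq_or_lt_of_le hj with h1 | h1
      · rw [← h1]
        simp [hc1, eta]
      · have hn1 : 1 ≤ n := by omega
        obtain ⟨m, rfl⟩ : ∃ m, n = m + 1 := ⟨n - 1, by omega⟩
        have hrecm := hrec m
        have ihm := ih (by omega)
        have hetadef : eta (m + 2) = 2 * (4 * ((m : ℚ) + 2) - 5) / ((m : ℚ) + 2) * eta (m + 1) :=
          rfl
        have hm2 : ((m : ℚ) + 2) ≠ 0 := by positivity
        rw [show m + 1 + 1 = m + 2 from rfl] at *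
        have : coeff (m + 2) f = -(8 * (m : ℚ) + 6) / ((m : ℚ) + 2) * coeff (m + 1) f := by
          field_simp
          linarith
        rw [this, ihm, hetadef]
        field_simp
        ring
end
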